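/- For any perfect matching M of a graph G with maximum degree Δ, the forcing number f(G,M) is at most the anti-forcing number af(G,M), which in turn is at most (Δ−1)·f(G,M). -/
import Mathlib


open SimpleGraph

variable {V : Type*}

/-- A closed walk is an `M`-alternating cycle: it is a cycle and its edges alternate
(cyclically) between `M` and the complement of `M`. -/
def SimpleGraph.IsAltCycle (G : SimpleGraph V) (M : Set (Sym2 V)) {v : V} (c : G.Walk v v) :
    Prop :=
  c.IsCycle ∧ List.Chain' (fun e f => (e ∈ M ↔ f ∉ M)) c.edges ∧
    ∀ e f, c.edges.head? = some e → c.edges.getLast? = some f → (f ∈ M ↔ e ∉ M)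

/-- `S` is a forcing set of the perfect matching `M`: `S ⊆ M` and `M` is the unique
perfect matching of `G` containing `S`. -/
def SimpleGraph.IsForcingSet (G : SimpleGraph V) (M : G.Subgraph) (S : Set (Sym2 V)) : Prop :=
  S ⊆ M.edgeSet ∧ ∀ N : G.Subgraph, N.IsPerfectMatching → S ⊆ N.edgeSet → N = M

/-- `S` is an anti-forcing set of the perfect matching `M`: `S` consists of edges of `G`
not in `M`, and `M` is the unique perfect matching of `G - S` (equivalently, the unique
perfect matching of `G` whose edge set avoids `S`). -/
def SimpleGraph.IsAntiForcingSet (G : SimpleGraph V) (M : G.Subgraph) (S : Set (Sym2 V)) :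
    Prop :=
  S ⊆ G.edgeSet \ M.edgeSet ∧
    ∀ N : G.Subgraph, N.IsPerfectMatching → Disjoint N.edgeSet S → N = M

/-- The forcing number `f(G,M)`. -/
noncomputable def SimpleGraph.forcingNum (G : SimpleGraph V) (M : G.Subgraph) : ℕ :=
  sInf {n | ∃ S : Set (Sym2 V), G.IsForcingSet M S ∧ S.ncard = n}

/-- The anti-forcing number `af(G,M)`. -/
noncomputable def SimpleGraph.antiForcingNum (G : SimpleGraph V) (M : G.Subgraph) : ℕ :=
  sInf {n | ∃ S : Set (Sym2 V), G.IsAntiForcingSet M S ∧ S.ncard = n}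

/-- A choice of a point of a `Sym2`. -/
noncomputable def sym2Pt (e : Sym2 V) : V :=
  (Classical.choose (Quot.exists_rep e)).1

lemma sym2Pt_mem (e : Sym2 V) : sym2Pt e ∈ e := by
  have key : ∀ (p : V × V) (z : Sym2 V), Quot.mk (Sym2.Rel V) p = z → p.1 ∈ z := by
    rintro ⟨a, b⟩ z hz
    rw [← hz]
    exact Sym2.mem_mk_left a b
  exact key _ e (Classical.choose_spec (Quot.exists_rep e))

/-- Two perfect matchings with one edge set contained in the other are equal. -/
lemma pm_eq_of_edgeSet_subset {G : SimpleGraph V} {M N : G.Subgraph}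
    (hM : M.IsPerfectMatching) (hN : N.IsPerfectMatching)
    (h : N.edgeSet ⊆ M.edgeSet) : N = M := by
  have hadj : ∀ v w, N.Adj v w → M.Adj v w := fun v w hvw =>
    SimpleGraph.Subgraph.mem_edgeSet.mp (h (SimpleGraph.Subgraph.mem_edgeSet.mpr hvw))
  ext v w
  · rw [Subgraph.isSpanning_iff.mp hN.2, Subgraph.isSpanning_iff.mp hM.2]
  · constructor
    · exact hadj v w
    · intro hvw
      obtain ⟨w', hw', _⟩ := hN.1 (hN.2 v)
      obtain ⟨w'', _, hu⟩ := hM.1 (hM.2 v)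
      have h1 : w' = w'' := hu w' (hadj v w' hw')
      have h2 : w = w'' := hu w hvw
      rwa [h2, ← h1]

/-- From any anti-forcing set one gets a forcing set of no larger size. -/
lemma forcingNum_le_ncard_of_antiforcing {G : SimpleGraph V} [Fintype V] {M : G.Subgraph}
    (hM : M.IsPerfectMatching) {T : Set (Sym2 V)} (hT : G.IsAntiForcingSet M T) :
    G.forcingNum M ≤ T.ncard := by
  classical
  have hmex : ∀ v : V, ∃! w, M.Adj v w := fun v => hM.1 (hM.2 v)
  set m : V → V := fun v => (hmex v).choose with hm
  have hmadj : ∀ v, M.Adj v (m v) := fun v => (hmex v).choose_spec.1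
  have hmuniq : ∀ v w, M.Adj v w → w = m v := fun v w h => ((hmex v).choose_spec.2) w h
  set f : Sym2 V → Sym2 V := fun e => s(sym2Pt e, m (sym2Pt e)) with hf
  set S := f '' T with hSdef
  have hforc : G.IsForcingSet M S := by
    constructor
    · rintro g ⟨e, _, rfl⟩
      exact SimpleGraph.Subgraph.mem_edgeSet.mpr (hmadj _)
    · intro N hN hSN
      by_contra hne
      have hnd : ¬ Disjoint N.edgeSet T := fun hd => hne (hT.2 N hN hd)
      obtain ⟨e, heN, heT⟩ := Set.not_disjoint_iff.mp hnd
      set u := sym2Pt e with hu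
      obtain ⟨w, hew⟩ := Sym2.mem_iff_exists.mp (sym2Pt_mem e)
      have hNuw : N.Adj u w := SimpleGraph.Subgraph.mem_edgeSet.mp (hew ▸ heN)
      have hfeS : f e ∈ S := Set.mem_image_of_mem f heT
      have hNum : N.Adj u (m u) := SimpleGraph.Subgraph.mem_edgeSet.mp (hSN hfeS)
      obtain ⟨w', _, huq⟩ := hN.1 (hN.2 u)
      have : w = m u := by rw [huq w hNuw, ← huq (m u) hNum]
      have heM : e ∈ M.edgeSet := by
        rw [hew, this]
        exact SimpleGraph.Subgraph.mem_edgeSet.mpr (hmadj u)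
      exact (hT.1 heT).2 heM
  calc G.forcingNum M ≤ S.ncard := Nat.sInf_le ⟨S, hforc, rfl⟩
    _ ≤ T.ncard := Set.ncard_image_le (Set.toFinite T)

theorem forcing_le_antiforcing_le (G : SimpleGraph V) [Fintype V] [DecidableRel G.Adj]
    (M : G.Subgraph) (hM : M.IsPerfectMatching) :
    G.forcingNum M ≤ G.antiForcingNum M ∧
      G.antiForcingNum M ≤ (G.maxDegree - 1) * G.forcingNum M := by
  classical
  -- part 1
  have hT0 : G.IsAntiForcingSet M (G.edgeSet \ M.edgeSet) := by
    refine ⟨subset_rfl, fun N hN hd => ?_⟩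
    refine pm_eq_of_edgeSet_subset hM hN (fun e he => ?_)
    by_contra heM
    exact Set.disjoint_left.mp hd he ⟨N.edgeSet_subset he, heM⟩
  have hafne : {n | ∃ S : Set (Sym2 V), G.IsAntiForcingSet M S ∧ S.ncard = n}.Nonempty :=
    ⟨_, _, hT0, rfl⟩
  obtain ⟨T, hT, hTc⟩ := Nat.sInf_mem hafne
  have part1 : G.forcingNum M ≤ G.antiForcingNum M := by
    rw [SimpleGraph.antiForcingNum, ← hTc]
    exact forcingNum_le_ncard_of_antiforcing hM hT
  -- part 2
  have hS0 : G.IsForcingSet M M.edgeSet := by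
    refine ⟨subset_rfl, fun N hN h => (pm_eq_of_edgeSet_subset hN hM h).symm⟩
  have hfne : {n | ∃ S : Set (Sym2 V), G.IsForcingSet M S ∧ S.ncard = n}.Nonempty :=
    ⟨_, _, hS0, rfl⟩
  obtain ⟨S, hS, hSc⟩ := Nat.sInf_mem hfne
  -- construct the anti-forcing set
  set A : Sym2 V → Set (Sym2 V) := fun e => G.incidenceSet (sym2Pt e) \ {e} with hA
  set T2 : Set (Sym2 V) := ⋃ e ∈ S, A e with hT2
  have hmexM : ∀ v : V, ∃! w, M.Adj v w := fun v => hM.1 (hM.2 v)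
  have hT2anti : G.IsAntiForcingSet M T2 := by
    constructor
    · intro g hg
      simp only [hT2, Set.mem_iUnion] at hg
      obtain ⟨e, heS, hgA⟩ := hg
      obtain ⟨⟨hgG, hug⟩, hgne⟩ := hgA
      refine ⟨hgG, fun hgM => ?_⟩
      set u := sym2Pt e with hu
      obtain ⟨w, hgw⟩ := Sym2.mem_iff_exists.mp hug
      obtain ⟨v', hev⟩ := Sym2.mem_iff_exists.mp (sym2Pt_mem e)
      have hMeuv : M.Adj u v' := SimpleGraph.Subgraph.mem_edgeSet.mp (hev ▸ hS.1 heS)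
      have hMuw : M.Adj u w := SimpleGraph.Subgraph.mem_edgeSet.mp (hgw ▸ hgM)
      obtain ⟨w'', _, huq⟩ := hmexM u
      have : w = v' := by rw [huq w hMuw, ← huq v' hMeuv]
      exact hgne (by rw [hgw, this, ← hev]; exact rfl)
    · intro N hN hd
      refine hS.2 N hN (fun e heS => ?_)
      set u := sym2Pt e with hu
      obtain ⟨w, hw, _⟩ := hN.1 (hN.2 u)
      have hgN : s(u, w) ∈ N.edgeSet := SimpleGraph.Subgraph.mem_edgeSet.mpr hw
      by_cases hge : s(u, w) = e
      · rwa [← hge]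
      · exfalso
        have hgT2 : s(u, w) ∈ T2 := by
          simp only [hT2, Set.mem_iUnion]
          exact ⟨e, heS, ⟨⟨N.edgeSet_subset hgN, Sym2.mem_mk_left u w⟩, hge⟩⟩
        exact Set.disjoint_left.mp hd hgN hgT2
  -- cardinality bound
  have hSfin : S.Finite := Set.toFinite S
  set sF : Finset (Sym2 V) := hSfin.toFinset with hsF
  set TF : Finset (Sym2 V) := sF.biUnion (fun e => ((A e).toFinite).toFinset) with hTF
  have hT2eq : T2 = ↑TF := by
    ext g
    simp only [hT2, hTF, Set.mem_iUnion, Finset.coe_biUnion, Finset.mem_coe,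
      Finset.mem_biUnion, Set.Finite.mem_toFinset, hsF]
  have hAcard : ∀ e ∈ sF, ((A e).toFinite).toFinset.card ≤ G.maxDegree - 1 := by
    intro e heF
    have heS : e ∈ S := (Set.Finite.mem_toFinset hSfin).mp heF
    set u := sym2Pt e with hu
    have heInc : e ∈ G.incidenceFinset u := by
      rw [SimpleGraph.mem_incidenceFinset]
      exact ⟨M.edgeSet_subset (hS.1 heS), sym2Pt_mem e⟩
    have hsub : ((A e).toFinite).toFinset ⊆ (G.incidenceFinset u).erase e := by
      intro g hg
      rw [Set.Finite.mem_toFinset] at hg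
      obtain ⟨hgi, hgne⟩ := hg
      exact Finset.mem_erase.mpr ⟨hgne, (SimpleGraph.mem_incidenceFinset _ _ _).mpr hgi⟩
    calc ((A e).toFinite).toFinset.card ≤ ((G.incidenceFinset u).erase e).card :=
          Finset.card_le_card hsub
      _ = (G.incidenceFinset u).card - 1 := Finset.card_erase_of_mem heInc
      _ = G.degree u - 1 := by rw [SimpleGraph.card_incidenceFinset_eq_degree]
      _ ≤ G.maxDegree - 1 := Nat.sub_le_sub_right (G.degree_le_maxDegree u) 1
  have hT2card : T2.ncard ≤ (G.maxDegree - 1) * G.forcingNum M := by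
    rw [hT2eq, Set.ncard_coe_finset]
    calc TF.card ≤ ∑ e ∈ sF, ((A e).toFinite).toFinset.card := Finset.card_biUnion_le
      _ ≤ ∑ _e ∈ sF, (G.maxDegree - 1) := Finset.sum_le_sum hAcard
      _ = sF.card * (G.maxDegree - 1) := by rw [Finset.sum_const, smul_eq_mul]
      _ = (G.maxDegree - 1) * G.forcingNum M := by
          rw [SimpleGraph.forcingNum, ← hSc, Set.ncard_eq_toFinset_card S hSfin, mul_comm]
  have part2 : G.antiForcingNum M ≤ (G.maxDegree - 1) * G.forcingNum M :=
    le_trans (Nat.sInf_le ⟨T2, hT2anti, rfl⟩) hT2card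
  exact ⟨part1, part2⟩
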